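/- If G is a softly reduced strong Gröbner basis (of a submodule of R[x₁,…,x_n]^k over a Euclidean domain R) in which every element is normalized, then G is a reduced strong Gröbner basis. -/

import Mathlib

open MvPolynomial

/-- Polynomial vectors: `R[x₁,…,x_n]^k`. -/
abbrev PolyVec (R : Type*) [CommSemiring R] (n k : ℕ) := Fin k → MvPolynomial (Fin n) R

/-- Monomial vectors `x^α e_i`, encoded as pairs `(α, i)`. -/
abbrev MonV (n k : ℕ) := (Fin n →₀ ℕ) × Fin k

/-- An admissible order on monomial vectors. -/
structure AdmissibleOrder (n k : ℕ) where
  le : MonV n k → MonV n k → Prop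
  refl : ∀ a, le a a
  trans : ∀ a b c, le a b → le b c → le a c
  antisymm : ∀ a b, le a b → le b a → a = b
  total : ∀ a b, le a b ∨ le b a
  dvd_le : ∀ (α β : Fin n →₀ ℕ) (i : Fin k), (∀ m, α m ≤ β m) → le (α, i) (β, i)
  add_le : ∀ (α β γ : Fin n →₀ ℕ) (i j : Fin k),
    le (α, i) (β, j) → le (α + γ, i) (β + γ, j)

variable {R : Type*} [CommRing R] {n k : ℕ}

/-- `m` is the leading monomial vector of `f` w.r.t. the admissible order `r`
(so in particular `f ≠ 0`). -/
def IsDeg (r : AdmissibleOrder n k) (f : PolyVec R n k) (m : MonV n k) : Prop :=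
  (f m.2).coeff m.1 ≠ 0 ∧ ∀ m' : MonV n k, (f m'.2).coeff m'.1 ≠ 0 → r.le m' m

/-- The leading term vector of `g` divides the leading term vector of `f`:
same position, componentwise smaller exponent, and the leading coefficient of `g`
divides that of `f` in `R`. -/
def LtDvd (r : AdmissibleOrder n k) (g f : PolyVec R n k) : Prop :=
  ∃ mg mf : MonV n k, IsDeg r g mg ∧ IsDeg r f mf ∧ mg.2 = mf.2 ∧
    (∀ m, mg.1 m ≤ mf.1 m) ∧ (g mg.2).coeff mg.1 ∣ (f mf.2).coeff mf.1

/-- `G` is a strong Gröbner basis of the submodule `I` w.r.t. `r`. -/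
def IsSGB (r : AdmissibleOrder n k) (G : Set (PolyVec R n k))
    (I : Submodule (MvPolynomial (Fin n) R) (PolyVec R n k)) : Prop :=
  (∀ g ∈ G, g ∈ I ∧ g ≠ 0) ∧
  ∀ f ∈ I, f ≠ 0 → ∃ g ∈ G, LtDvd r g f

/-- Multiplication of a polynomial vector by the term `a·x^m`. -/
noncomputable def termSMul (m : Fin n →₀ ℕ) (a : R) (g : PolyVec R n k) : PolyVec R n k :=
  fun j => MvPolynomial.monomial m a * g j

/-- `f` has a strong standard representation by `G`: `f = Σ aᵢ mᵢ gᵢ` with `gᵢ ∈ G`,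
`Lm(m₁g₁) = Lm(f)` and `Lm(mᵢgᵢ) < Lm(f)` for `i ≥ 2`. -/
def IsSSR (r : AdmissibleOrder n k) (G : Set (PolyVec R n k)) (f : PolyVec R n k) : Prop :=
  ∃ (N : ℕ) (hN : 0 < N) (a : Fin N → R) (m : Fin N → (Fin n →₀ ℕ))
    (g : Fin N → PolyVec R n k),
    (∀ i, g i ∈ G) ∧
    f = ∑ i, termSMul (m i) (a i) (g i) ∧
    ∃ mf m0 : MonV n k, IsDeg r f mf ∧ IsDeg r (g ⟨0, hN⟩) m0 ∧
      ((m ⟨0, hN⟩ + m0.1, m0.2) : MonV n k) = mf ∧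
      ∀ i : Fin N, i ≠ ⟨0, hN⟩ → ∃ mi : MonV n k, IsDeg r (g i) mi ∧
        r.le (m i + mi.1, mi.2) mf ∧ ((m i + mi.1, mi.2) : MonV n k) ≠ mf

/-- `h` is an `S`-polynomial vector of the ordered pair `(f, g)` w.r.t. the
Euclidean grading `δ`. -/
def IsSPolyPair {W : Type*} [LinearOrder W] (δ : R → W) (r : AdmissibleOrder n k)
    (f g h : PolyVec R n k) : Prop :=
  ∃ mf mg : MonV n k, IsDeg r f mf ∧ IsDeg r g mg ∧
    ((mf.2 ≠ mg.2 ∧ h = 0) ∨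
     (mf.2 = mg.2 ∧ δ ((g mg.2).coeff mg.1) ≤ δ ((f mf.2).coeff mf.1) ∧
       ∃ q : R,
         δ ((f mf.2).coeff mf.1 - q * (g mg.2).coeff mg.1) < δ ((f mf.2).coeff mf.1) ∧
         h = termSMul ((mf.1 ⊔ mg.1) - mg.1) 1 f - termSMul ((mf.1 ⊔ mg.1) - mf.1) q g))

/-- `h` is an `S`-polynomial vector of the (unordered) set `{f, g}`. -/
def IsSPolySet {W : Type*} [LinearOrder W] (δ : R → W) (r : AdmissibleOrder n k)
    (f g h : PolyVec R n k) : Prop :=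
  IsSPolyPair δ r f g h ∨ IsSPolyPair δ r g f h

section Reduction

variable {R : Type*} [CommRing R] {n k : ℕ} {W' : Type*} [LinearOrder W']

/-- The term `b·x^α e_i` is reducible by `G`: some `g ∈ G` has `Lm(g) ∣ x^α e_i` and
`δ̂(b − q·Lc(g)) < δ̂(b)` for some `q ∈ R`. -/
def TermRed (dh : R → W') (r : AdmissibleOrder n k) (G : Set (PolyVec R n k))
    (b : R) (α : Fin n →₀ ℕ) (i : Fin k) : Prop :=
  ∃ g ∈ G, ∃ mg : MonV n k, IsDeg r g mg ∧ mg.2 = i ∧ (∀ m, mg.1 m ≤ α m) ∧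
    ∃ q : R, dh (b - q * (g mg.2).coeff mg.1) < dh b

/-- `f` is reducible by `G` if one of its terms is reducible by `G`. -/
def Red (dh : R → W') (r : AdmissibleOrder n k) (G : Set (PolyVec R n k))
    (f : PolyVec R n k) : Prop :=
  ∃ (α : Fin n →₀ ℕ) (i : Fin k), (f i).coeff α ≠ 0 ∧ TermRed dh r G ((f i).coeff α) α i

/-- `p` is normalized: `p ≠ 0` and `δ̂(Lc p) ≤ δ̂(u · Lc p)` for every unit `u`. -/
def Normalized (dh : R → W') (r : AdmissibleOrder n k) (p : PolyVec R n k) : Prop :=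
  p ≠ 0 ∧ ∃ mp : MonV n k, IsDeg r p mp ∧
    ∀ u : R, IsUnit u → dh ((p mp.2).coeff mp.1) ≤ dh (u * (p mp.2).coeff mp.1)

/-- `G` is a reduced strong Gröbner basis of `I`. -/
def IsRedSGB (dh : R → W') (r : AdmissibleOrder n k) (G : Set (PolyVec R n k))
    (I : Submodule (MvPolynomial (Fin n) R) (PolyVec R n k)) : Prop :=
  IsSGB r G I ∧ ∀ g ∈ G, Normalized dh r g ∧ ¬ Red dh r (G \ {g}) g

end Reduction

section Twelve

variable {R : Type*} [CommRing R] {n k : ℕ} {W' : Type*} [LinearOrder W']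

/-- The polynomial vector `p · e_i`. -/
noncomputable def eVec (i : Fin k) (p : MvPolynomial (Fin n) R) : PolyVec R n k :=
  fun j => if j = i then p else 0

/-- `f` is softly reducible by `G`: `f − Lt(f)` is reducible by `G`, or some `g ∈ G`
has `Lt(g) ∣ Lt(f)`. -/
def SoftRed (dh : R → W') (r : AdmissibleOrder n k) (G : Set (PolyVec R n k))
    (f : PolyVec R n k) : Prop :=
  (∃ m : MonV n k, IsDeg r f m ∧
      Red dh r G (f - eVec m.2 (MvPolynomial.monomial m.1 ((f m.2).coeff m.1)))) ∨
  (∃ g ∈ G, LtDvd r g f)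

/-- `G` is softly reduced: no element is softly reducible by the others. -/
def SoftlyReduced (dh : R → W') (r : AdmissibleOrder n k)
    (G : Set (PolyVec R n k)) : Prop :=
  ∀ f ∈ G, ¬ SoftRed dh r (G \ {f}) f

end Twelve

section Aux

variable {R : Type*} [CommRing R] {n k : ℕ} {W' : Type*} [LinearOrder W']

lemma isDeg_unique {r : AdmissibleOrder n k} {p : PolyVec R n k} {m m' : MonV n k}
    (h : IsDeg r p m) (h' : IsDeg r p m') : m = m' :=
  r.antisymm _ _ (h'.2 m h.1) (h.2 m' h'.1)

lemma termSMul_mem {I : Submodule (MvPolynomial (Fin n) R) (PolyVec R n k)}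
    {g : PolyVec R n k} (hg : g ∈ I) (γ : Fin n →₀ ℕ) (t : R) :
    termSMul γ t g ∈ I := by
  have h : termSMul γ t g = (MvPolynomial.monomial γ t) • g := by
    funext j
    simp [termSMul, Pi.smul_apply, smul_eq_mul]
  rw [h]
  exact I.smul_mem _ hg

lemma reduce_step {r : AdmissibleOrder n k} {u g : PolyVec R n k} {mf mg : MonV n k}
    (hu : IsDeg r u mf) (hg : IsDeg r g mg) (hpos : mg.2 = mf.2)
    (hle : ∀ m, mg.1 m ≤ mf.1 m) (t : R) :
    ((u - termSMul (mf.1 - mg.1) t g) mf.2).coeff mf.1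
      = (u mf.2).coeff mf.1 - t * (g mg.2).coeff mg.1 ∧
    (((u mf.2).coeff mf.1 - t * (g mg.2).coeff mg.1) ≠ 0 →
      IsDeg r (u - termSMul (mf.1 - mg.1) t g) mf) := by
  have hγ : mg.1 ≤ mf.1 := Finsupp.le_def.2 hle
  have hsub : mf.1 - (mf.1 - mg.1) = mg.1 := tsub_tsub_cancel_of_le hγ
  have hadd : mg.1 + (mf.1 - mg.1) = mf.1 := add_tsub_cancel_of_le hγ
  have hcoe : ((u - termSMul (mf.1 - mg.1) t g) mf.2).coeff mf.1
      = (u mf.2).coeff mf.1 - t * (g mg.2).coeff mg.1 := by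
    rw [Pi.sub_apply, MvPolynomial.coeff_sub]
    congr 1
    show MvPolynomial.coeff mf.1 (MvPolynomial.monomial (mf.1 - mg.1) t * g mf.2) = _
    rw [MvPolynomial.coeff_monomial_mul', if_pos tsub_le_self, hsub, hpos]
  refine ⟨hcoe, fun hne => ⟨by rw [hcoe]; exact hne, ?_⟩⟩
  rintro ⟨β, j⟩ hc
  have hc' : (u j).coeff β ≠ 0 ∨
      ((termSMul (mf.1 - mg.1) t g) j).coeff β ≠ 0 := by
    by_contra hcon
    push_neg at hcon
    apply hc
    rw [Pi.sub_apply, MvPolynomial.coeff_sub, hcon.1, hcon.2, sub_zero]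
  rcases hc' with h | h
  · exact hu.2 (β, j) h
  · have h' : MvPolynomial.coeff β
        (MvPolynomial.monomial (mf.1 - mg.1) t * g j) ≠ 0 := h
    rw [MvPolynomial.coeff_monomial_mul'] at h'
    by_cases hβ : mf.1 - mg.1 ≤ β
    · rw [if_pos hβ] at h'
      have hgc : (g j).coeff (β - (mf.1 - mg.1)) ≠ 0 := fun hz => h' (by rw [hz, mul_zero])
      have hle1 := hg.2 (β - (mf.1 - mg.1), j) hgc
      have hle2 := r.add_le _ _ (mf.1 - mg.1) _ _ hle1
      rw [tsub_add_cancel_of_le hβ, hadd] at hle2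
      rw [hpos] at hle2
      have : mf = (mf.1, mf.2) := rfl
      rw [this]
      exact hle2
    · exact absurd h' (by rw [if_neg hβ]; exact fun h => h rfl)

end Aux

/-- A softly reduced strong Gröbner basis all of whose elements are
normalized is a reduced strong Gröbner basis. -/
theorem reduced_of_softly_reduced_and_normalized
    {R : Type*} [CommRing R] [IsDomain R] {n k : ℕ}
    {W : Type*} [LinearOrder W] [WellFoundedLT W]
    {W' : Type*} [LinearOrder W'] [WellFoundedLT W']
    (δ : R → W)
    (hzero : ∀ a : R, δ 0 ≤ δ a)
    (hmul : ∀ a b : R, a ≠ 0 → δ b ≤ δ (a * b))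
    (hdiv : ∀ a b : R, a ≠ 0 → ∃ q s : R, b = q * a + s ∧ δ s < δ a)
    (dh : R → W') (hinj : Function.Injective dh)
    (dh0 : ∀ a : R, dh 0 ≤ dh a)
    (hmono : ∀ a b : R, δ a < δ b → dh a < dh b)
    (r : AdmissibleOrder n k)
    (I : Submodule (MvPolynomial (Fin n) R) (PolyVec R n k))
    (G : Set (PolyVec R n k))
    (hSGB : IsSGB r G I)
    (hsoft : SoftlyReduced dh r G)
    (hnorm : ∀ g ∈ G, Normalized dh r g) :
    IsRedSGB dh r G I := by
  refine ⟨hSGB, fun f hf => ⟨hnorm f hf, ?_⟩⟩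
  rintro ⟨α, i, hci, g, hgGf, mg, hgdeg, hgi, hgle, q, hq⟩
  obtain ⟨-, mf, hfdeg, hnormf⟩ := hnorm f hf
  by_cases hmeq : ((α, i) : MonV n k) = mf
  · -- the reducible term is the leading term
    subst hmeq
    set b := (f i).coeff α with hb
    set c := (g mg.2).coeff mg.1 with hc
    have hfI : f ∈ I := (hSGB.1 f hf).1
    set S : Set W' := {w | ∃ h, h ∈ I ∧ IsDeg r h (α, i) ∧ dh ((h i).coeff α) = w}
      with hS
    have hbS : dh b ∈ S := ⟨f, hfI, hfdeg, rfl⟩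
    obtain ⟨w₀, ⟨h₀, hh₀I, hh₀deg, hw₀⟩, hmin⟩ :=
      (wellFounded_lt (α := W')).has_min S ⟨_, hbS⟩
    set b₀ := (h₀ i).coeff α with hb₀
    have hgG : g ∈ G := hgGf.1
    have hgI : g ∈ I := (hSGB.1 g hgG).1
    by_cases hw : w₀ = dh b
    · -- minimum is achieved by f itself: reduce by g directly
      by_cases hs : b - q * c = 0
      · -- then Lt(g) ∣ Lt(f): soft reducibility contradiction
        apply hsoft f hf
        right
        refine ⟨g, hgGf, mg, (α, i), hgdeg, hfdeg, hgi, hgle, q, ?_⟩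
        rw [sub_eq_zero] at hs
        rw [← hc, ← hb, hs, mul_comm]
      · obtain ⟨hcoe, hdeg'⟩ := reduce_step hfdeg hgdeg hgi hgle q
        have hmem : dh (b - q * c) ∈ S :=
          ⟨f - termSMul (α - mg.1) q g, sub_mem hfI (termSMul_mem hgI _ _),
            hdeg' hs, by rw [hcoe]⟩
        exact hmin _ hmem (hw ▸ hq)
    · have hlt : w₀ < dh b := lt_of_le_of_ne (not_lt.1 (hmin _ hbS)) hw
      have hh₀ne : h₀ ≠ 0 := by
        intro h
        exact hh₀deg.1 (by rw [h]; simp)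
      obtain ⟨g₂, hg₂G, mg₂, mh, hg₂deg, hhdeg', hpos2, hle2, hdvd2⟩ :=
        hSGB.2 h₀ hh₀I hh₀ne
      have hmh : mh = (α, i) := isDeg_unique hhdeg' hh₀deg
      subst hmh
      by_cases hgf : g₂ = f
      · subst hgf
        have hmg₂ : mg₂ = (α, i) := isDeg_unique hg₂deg hfdeg
        subst hmg₂
        have hdvd2' : b ∣ b₀ := hdvd2
        obtain ⟨e, he⟩ := hdvd2'
        have hbne : b ≠ 0 := hfdeg.1
        have hb₀ne : b₀ ≠ 0 := hh₀deg.1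
        have h1 : ¬ δ b < δ b₀ := by
          intro hlt'
          have := hmono _ _ hlt'
          rw [hw₀] at this
          exact lt_asymm hlt this
        obtain ⟨t, s, hts, hslt⟩ := hdiv b₀ b hb₀ne
        have hs' : s = (1 - t * e) * b := by linear_combination -hts - t * he
        by_cases h1te : 1 - t * e = 0
        · have hunit : IsUnit e :=
            IsUnit.of_mul_eq_one (a := e) t (by linear_combination -h1te)
          have hn := hnormf e hunit
          rw [mul_comm, ← he] at hn
          rw [← hw₀] at hlt
          exact absurd hn (not_le.2 hlt)
        · have h2 : δ b ≤ δ s := by rw [hs']; exact hmul _ _ h1te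
          have h3 : δ b₀ ≤ δ b := not_lt.1 h1
          exact absurd hslt (not_lt.2 (h3.trans h2))
      · have hg₂I : g₂ ∈ I := (hSGB.1 g₂ hg₂G).1
        have hc₂ : (g₂ mg₂.2).coeff mg₂.1 ≠ 0 := hg₂deg.1
        obtain ⟨t, s, hts, hslt⟩ := hdiv _ b hc₂
        by_cases hs : s = 0
        · apply hsoft f hf
          right
          refine ⟨g₂, ⟨hg₂G, hgf⟩, mg₂, (α, i), hg₂deg, hfdeg, hpos2, hle2, t, ?_⟩
          rw [hs, add_zero] at hts
          rw [← hb, hts, mul_comm]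
        · obtain ⟨hcoe, hdeg'⟩ := reduce_step hfdeg hg₂deg hpos2 hle2 t
          have hsne : b - t * (g₂ mg₂.2).coeff mg₂.1 ≠ 0 := by
            intro h
            exact hs (by linear_combination h - hts)
          have hscoe : ((f - termSMul (α - mg₂.1) t g₂) i).coeff α = s := by
            rw [hcoe, ← hb]
            linear_combination hts
          have hmem : dh s ∈ S :=
            ⟨f - termSMul (α - mg₂.1) t g₂, sub_mem hfI (termSMul_mem hg₂I _ _),
              hdeg' hsne, hscoe.symm ▸ rfl⟩
          have hdvd2' : (g₂ mg₂.2).coeff mg₂.1 ∣ b₀ := hdvd2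
          obtain ⟨d, hd⟩ := hdvd2'
          have hd0 : d ≠ 0 := by
            intro h
            apply hh₀deg.1
            show b₀ = 0
            rw [hd, h, mul_zero]
          have hδ : δ s < δ b₀ := by
            refine hslt.trans_le ?_
            rw [hd, mul_comm]
            exact hmul d _ hd0
          exact hmin _ hmem (hw₀ ▸ hmono _ _ hδ)
  · -- the reducible term is not the leading term: f − Lt(f) is reducible
    apply hsoft f hf
    left
    refine ⟨mf, hfdeg, ?_⟩
    have key : ((f - eVec mf.2 (MvPolynomial.monomial mf.1 ((f mf.2).coeff mf.1))) i).coeff α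
        = (f i).coeff α := by
      rw [Pi.sub_apply, MvPolynomial.coeff_sub, eVec]
      by_cases hi : i = mf.2
      · rw [if_pos hi, MvPolynomial.coeff_monomial, if_neg, sub_zero]
        intro h
        exact hmeq (by rw [Prod.ext_iff]; exact ⟨h.symm, hi⟩)
      · rw [if_neg hi, MvPolynomial.coeff_zero, sub_zero]
    refine ⟨α, i, ?_, ?_⟩
    · rw [key]; exact hci
    · rw [key]; exact ⟨g, hgGf, mg, hgdeg, hgi, hgle, q, hq⟩
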